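/- Let p be an odd prime and define the Bell operator B = (1/p) Σ_{n,x,y∈Z_p} ω^{nxy} A_x^n ⊗ B_y^n on C^p ⊗ C^p, where A_x = ω^{2^{-1}x(2x+1)} D_{(1|x)} and B_y = ω^{4^{-1}y(y+1)} D_{(1|2^{-1}y)}. Then the largest eigenvalue of B equals p times the largest eigenvalue of the single-qudit operator S = Σ_{B∈Z_p} |ψ_B^{-B(B+2^{-1})}⟩⟨ψ_B^{-B(B+2^{-1})}|. -/

import Mathlib

open Complex Matrix BigOperators Finset
open scoped Kronecker

noncomputable section

/-- Additive character `a ↦ exp(2πi a/p)` on `ZMod p`. -/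
def chi (p : ℕ) (a : ZMod p) : ℂ := Complex.exp (2 * Real.pi * Complex.I * (a.val : ℂ) / p)

/-- The shift operator `X : |j⟩ ↦ |j+1⟩`. -/
def Xop (p : ℕ) : Matrix (ZMod p) (ZMod p) ℂ := fun j k => if j = k + 1 then 1 else 0

/-- The clock operator `Z : |j⟩ ↦ ω^j |j⟩`. -/
def Zop (p : ℕ) : Matrix (ZMod p) (ZMod p) ℂ := Matrix.diagonal (fun j => chi p j)

/-- Weyl-Heisenberg displacement operator `D_(x|z) = ω^{2⁻¹ x z} X^x Z^z`. -/
def Dop (p : ℕ) [NeZero p] (x z : ZMod p) : Matrix (ZMod p) (ZMod p) ℂ :=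
  chi p ((2 : ZMod p)⁻¹ * x * z) • (Xop p ^ x.val * Zop p ^ z.val)

/-- The stabilizer MUB vector `|ψ_B^V⟩ = p^{-1/2} Σ_k ω^{2⁻¹ B k² - V k} |k⟩`. -/
def psi (p : ℕ) (B V : ZMod p) : ZMod p → ℂ :=
  fun k => ((Real.sqrt p : ℂ))⁻¹ * chi p ((2 : ZMod p)⁻¹ * B * k ^ 2 - V * k)

/-- The magic state `|f_{a,b,c}⟩ = p^{-1/2} Σ_k ω^{a k³ + b k² + c k} |k⟩`. -/
def magic (p : ℕ) (a b c : ZMod p) : ZMod p → ℂ :=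
  fun k => ((Real.sqrt p : ℂ))⁻¹ * chi p (a * k ^ 3 + b * k ^ 2 + c * k)

/-- Rank-one projector `|v⟩⟨v|`. -/
def proj (p : ℕ) (v : ZMod p → ℂ) : Matrix (ZMod p) (ZMod p) ℂ :=
  fun i j => v i * (starRingEnd ℂ) (v j)

/-- The single-qudit operator `S = Σ_B |ψ_B^{-B(B+2⁻¹)}⟩⟨ψ_B^{-B(B+2⁻¹)}|`. -/
def Sop (p : ℕ) [NeZero p] : Matrix (ZMod p) (ZMod p) ℂ :=
  ∑ B : ZMod p, proj p (psi p B (-B * (B + (2 : ZMod p)⁻¹)))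

/-- Alice's measurement operator `A_x = ω^{2⁻¹x(2x+1)} D_(1|x)`. -/
def Aop (p : ℕ) [NeZero p] (x : ZMod p) : Matrix (ZMod p) (ZMod p) ℂ :=
  chi p ((2 : ZMod p)⁻¹ * x * (2 * x + 1)) • Dop p 1 x

/-- Bob's measurement operator `B_y = ω^{4⁻¹y(y+1)} D_(1|2⁻¹y)`. -/
def Bop (p : ℕ) [NeZero p] (y : ZMod p) : Matrix (ZMod p) (ZMod p) ℂ :=
  chi p ((4 : ZMod p)⁻¹ * y * (y + 1)) • Dop p 1 ((2 : ZMod p)⁻¹ * y)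

/-- The Bell operator `B = (1/p) Σ_{n,x,y} ω^{nxy} A_x^n ⊗ B_y^n`. -/
def Bell (p : ℕ) [NeZero p] : Matrix (ZMod p × ZMod p) (ZMod p × ZMod p) ℂ :=
  (p : ℂ)⁻¹ • ∑ n : ZMod p, ∑ x : ZMod p, ∑ y : ZMod p,
    chi p (n * x * y) • ((Aop p x ^ n.val) ⊗ₖ (Bop p y ^ n.val))


section CharLemmas
variable (p : ℕ) [Fact p.Prime]

lemma p_pos : 0 < p := (Fact.out : p.Prime).pos
lemma pC_ne : (p : ℂ) ≠ 0 := Nat.cast_ne_zero.mpr (p_pos p).ne'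

lemma chi_natCast (m : ℕ) : chi p (m : ZMod p) = Complex.exp (2 * Real.pi * Complex.I * m / p) := by
  have : NeZero p := ⟨(p_pos p).ne'⟩
  rw [chi, ZMod.val_natCast]
  conv_rhs => rw [← Nat.div_add_mod m p]
  push_cast
  rw [mul_add, add_div, Complex.exp_add]
  have : 2 * (Real.pi:ℂ) * Complex.I * (↑p * ↑(m / p)) / ↑p = ↑(m/p) * (2 * ↑Real.pi * Complex.I) := by
    rw [div_eq_iff (pC_ne p)]; ring
  rw [this, Complex.exp_nat_mul, Complex.exp_two_pi_mul_I, one_pow, one_mul]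

lemma chi_add (a b : ZMod p) : chi p (a + b) = chi p a * chi p b := by
  have : NeZero p := ⟨(p_pos p).ne'⟩
  have h : a + b = ((a.val + b.val : ℕ) : ZMod p) := by push_cast [ZMod.natCast_val, ZMod.cast_id]; ring
  rw [h, chi_natCast]
  push_cast
  rw [mul_add, add_div, Complex.exp_add, chi, chi]

lemma chi_zero : chi p 0 = 1 := by
  have : NeZero p := ⟨(p_pos p).ne'⟩
  simp [chi]

lemma chi_conj (a : ZMod p) : (starRingEnd ℂ) (chi p a) = chi p (-a) := by
  have h : chi p (-a) * chi p a = 1 := by rw [← chi_add]; simp [chi_zero]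
  have h2 : (starRingEnd ℂ) (chi p a) * chi p a = 1 := by
    rw [chi, ← Complex.exp_conj, ← Complex.exp_add]
    have : (starRingEnd ℂ) (2 * ↑Real.pi * Complex.I * ↑(ZMod.val a) / ↑p) = -(2 * ↑Real.pi * Complex.I * ↑(ZMod.val a) / ↑p) := by
      simp only [map_div₀, _root_.map_mul, Complex.conj_I, map_ofNat, Complex.conj_natCast,
        Complex.conj_ofReal]
      ring
    rw [this, neg_add_cancel, Complex.exp_zero]
  have hne : chi p a ≠ 0 := by
    intro h0; rw [h0, mul_zero] at h2; exact one_ne_zero h2.symm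
  have := mul_right_cancel₀ hne (h2.trans h.symm)
  exact this

lemma chi_pow (a : ZMod p) (m : ℕ) : chi p a ^ m = chi p ((m : ZMod p) * a) := by
  induction m with
  | zero => simp [chi_zero]
  | succ k ih => rw [pow_succ, ih, ← chi_add]; push_cast; ring_nf

lemma chi_eq_one_iff (a : ZMod p) : chi p a = 1 ↔ a = 0 := by
  have : NeZero p := ⟨(p_pos p).ne'⟩
  constructor
  · intro h
    rw [chi, Complex.exp_eq_one_iff] at h
    obtain ⟨n, hn⟩ := h
    have hp : (p : ℂ) ≠ 0 := Nat.cast_ne_zero.mpr (p_pos p).ne'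
    have hpi : (Real.pi : ℂ) ≠ 0 := by exact_mod_cast Real.pi_ne_zero
    have hv : (a.val : ℂ) = (n : ℂ) * p := by
      have h2 : (2 : ℂ) * Real.pi * Complex.I * (a.val : ℂ)
          = (2 : ℂ) * Real.pi * Complex.I * ((n : ℂ) * p) := by
        have := congrArg (· * (p : ℂ)) hn
        simp only [div_mul_cancel₀ _ hp] at this
        linear_combination this
      exact mul_left_cancel₀ (by simp [hpi, Complex.I_ne_zero]) h2
    have hvz : (a.val : ℤ) = n * p := by exact_mod_cast hv
    have hlt : a.val < p := ZMod.val_lt a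
    have hple : (0:ℤ) < p := by exact_mod_cast p_pos p
    have hn0 : n = 0 := by nlinarith [Int.natCast_nonneg a.val,
      (by exact_mod_cast hlt : (a.val : ℤ) < p)]
    have hval : a.val = 0 := by subst hn0; rw [zero_mul] at hvz; exact_mod_cast hvz
    exact (ZMod.val_eq_zero a).mp hval
  · rintro rfl; exact chi_zero p

lemma chi_sum_eq_zero {a : ZMod p} (ha : a ≠ 0) : ∑ x : ZMod p, chi p (a * x) = 0 := by
  have : NeZero p := ⟨(p_pos p).ne'⟩
  set c := ∑ x : ZMod p, chi p (a * x) with hc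
  have hshift : chi p a * c = c := by
    rw [hc, Finset.mul_sum]
    have := Fintype.sum_equiv (Equiv.addRight (1 : ZMod p))
      (fun x => chi p a * chi p (a * x)) (fun x => chi p (a * x))
      (fun x => by
        show chi p a * chi p (a * x) = chi p (a * ((Equiv.addRight (1:ZMod p)) x))
        rw [← chi_add]; congr 1; simp only [Equiv.coe_addRight]; ring)
    exact this
  have h1 : (chi p a - 1) * c = 0 := by linear_combination hshift
  rcases mul_eq_zero.mp h1 with h | h
  · exact absurd ((chi_eq_one_iff p a).mp (sub_eq_zero.mp h)) ha
  · exact h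

lemma chi_sum (a : ZMod p) : ∑ x : ZMod p, chi p (a * x) = if a = 0 then (p : ℂ) else 0 := by
  have : NeZero p := ⟨(p_pos p).ne'⟩
  split_ifs with h
  · subst h; simp [chi_zero, ZMod.card]
  · exact chi_sum_eq_zero p h

end CharLemmas

section MatrixLemmas
variable (p : ℕ) [Fact p.Prime]
lemma two_ne (hp2 : p ≠ 2) : (2 : ZMod p) ≠ 0 := by
  haveI : NeZero p := ⟨(p_pos p).ne'⟩
  intro h
  have h2 : ((2 : ℕ) : ZMod p) = 0 := by exact_mod_cast h
  rw [ZMod.natCast_eq_zero_iff] at h2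
  exact hp2 ((Nat.prime_dvd_prime_iff_eq (Fact.out : p.Prime) Nat.prime_two).mp h2)

lemma Zop_pow (v : ℕ) : Zop p ^ v = Matrix.diagonal (fun j => chi p ((v : ZMod p) * j)) := by
  ext j k
  rw [Zop, Matrix.diagonal_pow, Matrix.diagonal_apply, Matrix.diagonal_apply]
  split_ifs with h
  · simpa using chi_pow p j v
  · rfl

lemma XZ_entry (x : ZMod p) (j k : ZMod p) :
    (Xop p * Zop p ^ x.val) j k = if j = k + 1 then chi p (x * k) else 0 := by
  rw [Zop_pow, Matrix.mul_diagonal]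
  rw [ZMod.natCast_val, ZMod.cast_id]
  simp [Xop, ite_mul]

/-- entry formula for powers of `X Z^x` -/
lemma XZ_pow_entry (hp2 : p ≠ 2) (x : ZMod p) (m : ℕ) (j k : ZMod p) :
    ((Xop p * Zop p ^ x.val) ^ m) j k =
      if j = k + (m : ZMod p) then
        chi p (x * ((m : ZMod p) * k + (2 : ZMod p)⁻¹ * m * (m - 1))) else 0 := by
  induction m generalizing j k with
  | zero =>
    push_cast
    simp [Matrix.one_apply, chi_zero]
  | succ m ih =>
    rw [pow_succ, Matrix.mul_apply]
    have hterm : ∀ t : ZMod p, ((Xop p * Zop p ^ x.val) ^ m) j t *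
        (Xop p * Zop p ^ x.val) t k
        = if t = k + 1 then ((Xop p * Zop p ^ x.val) ^ m) j t * chi p (x * k) else 0 := by
      intro t
      rw [XZ_entry]
      split_ifs <;> simp
    rw [Finset.sum_congr rfl (fun t _ => hterm t), Finset.sum_ite_eq' Finset.univ (k+1)]
    simp only [Finset.mem_univ, if_true]
    rw [ih]
    push_cast
    by_cases h : j = k + ((m : ZMod p) + 1)
    · rw [if_pos (by rw [h]; ring), if_pos h, ← chi_add]
      congr 1
      have h2 := two_ne p hp2
      field_simp
      ring
    · rw [if_neg (by intro hc; exact h (by rw [hc]; ring)), if_neg h, zero_mul]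

lemma Aop_eq (hp2 : p ≠ 2) (x : ZMod p) : Aop p x = chi p (x^2 + x) • (Xop p * Zop p ^ x.val) := by
  rw [Aop, Dop, smul_smul, ← chi_add]
  have h1 : (1 : ZMod p).val = 1 := ZMod.val_one'' (by
    have := (Fact.out : p.Prime).one_lt; omega)
  rw [h1, pow_one]
  congr 2
  have h2 := two_ne p hp2
  field_simp
  ring

lemma Aop_pow_entry (hp2 : p ≠ 2) (x : ZMod p) (m : ℕ) (j k : ZMod p) :
    (Aop p x ^ m) j k = if j = k + (m : ZMod p) then
      chi p ((m : ZMod p) * (x^2 + x) + x * ((m : ZMod p) * k + (2 : ZMod p)⁻¹ * m * (m - 1)))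
      else 0 := by
  rw [Aop_eq p hp2, smul_pow, Matrix.smul_apply, XZ_pow_entry p hp2, chi_pow]
  split_ifs with h
  · rw [smul_eq_mul, ← chi_add]
  · simp

lemma Bop_eq_Aop (hp2 : p ≠ 2) (y : ZMod p) : Bop p y = Aop p ((2 : ZMod p)⁻¹ * y) := by
  rw [Bop, Aop]
  congr 1
  have h2 : (2 : ZMod p)⁻¹ * 2 = 1 := inv_mul_cancel₀ (two_ne p hp2)
  have h4 : (4 : ZMod p)⁻¹ = (2 : ZMod p)⁻¹ * (2 : ZMod p)⁻¹ := by
    rw [show (4 : ZMod p) = 2 * 2 by norm_num, mul_inv]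
  rw [h4]
  congr 2
  field_simp
  linear_combination -y * h2

lemma sqrtp_sq : ((Real.sqrt p : ℂ))⁻¹ * ((Real.sqrt p : ℂ))⁻¹ = (p : ℂ)⁻¹ := by
  rw [← mul_inv]
  congr 1
  rw [← Complex.ofReal_mul, Real.mul_self_sqrt (Nat.cast_nonneg p)]
  simp

lemma S_entry (hp2 : p ≠ 2) (j k : ZMod p) : (p : ℂ) * Sop p j k
    = ∑ t : ZMod p, chi p ((j - k) * t^2 + (2 : ZMod p)⁻¹ * (j - k) * (j + k + 1) * t) := by
  rw [Sop]
  rw [Matrix.sum_apply, Finset.mul_sum]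
  apply Finset.sum_congr rfl
  intro B _
  simp only [proj, psi]
  rw [_root_.map_mul, chi_conj, map_inv₀, Complex.conj_ofReal]
  have : (p:ℂ) * ((↑(Real.sqrt p))⁻¹ * chi p ((2:ZMod p)⁻¹ * B * j ^ 2 - -B * (B + (2:ZMod p)⁻¹) * j)
      * ((↑(Real.sqrt p))⁻¹ * chi p (-((2:ZMod p)⁻¹ * B * k ^ 2 - -B * (B + (2:ZMod p)⁻¹) * k))))
      = ((p:ℂ) * ((↑(Real.sqrt p))⁻¹ * (↑(Real.sqrt p))⁻¹)) *
        (chi p ((2:ZMod p)⁻¹ * B * j ^ 2 - -B * (B + (2:ZMod p)⁻¹) * j)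
         * chi p (-((2:ZMod p)⁻¹ * B * k ^ 2 - -B * (B + (2:ZMod p)⁻¹) * k))) := by ring
  rw [this, sqrtp_sq, mul_inv_cancel₀ (pC_ne p), one_mul, ← chi_add]
  congr 1
  have h2 := two_ne p hp2
  field_simp
  ring

/-- inner double sum evaluation -/
lemma Hsum (hp2 : p ≠ 2) (n k1 k2 : ZMod p) :
    ∑ x : ZMod p, ∑ u : ZMod p,
      chi p (n * x * (2 * u) + ((n * (x^2 + x) + x * (n * k1 + (2 : ZMod p)⁻¹ * n * (n - 1)))
        + (n * (u^2 + u) + u * (n * k2 + (2 : ZMod p)⁻¹ * n * (n - 1)))))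
    = (if n * (k1 - k2) = 0 then (p : ℂ) else 0)
      * ∑ t : ZMod p, chi p (n * t^2 + (2 : ZMod p)⁻¹ * n * (2 * k2 + n + 1) * t) := by
  have key : ∀ x : ZMod p, (∑ u : ZMod p,
      chi p (n * x * (2 * u) + ((n * (x^2 + x) + x * (n * k1 + (2 : ZMod p)⁻¹ * n * (n - 1)))
        + (n * (u^2 + u) + u * (n * k2 + (2 : ZMod p)⁻¹ * n * (n - 1))))))
      = chi p ((n * (k1 - k2)) * x)
        * ∑ t : ZMod p, chi p (n * t^2 + (2 : ZMod p)⁻¹ * n * (2 * k2 + n + 1) * t) := by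
    intro x
    rw [Finset.mul_sum]
    refine (Fintype.sum_equiv (Equiv.subRight x)
      (fun t : ZMod p => chi p ((n * (k1 - k2)) * x)
        * chi p (n * t^2 + (2 : ZMod p)⁻¹ * n * (2 * k2 + n + 1) * t))
      (fun u : ZMod p =>
        chi p (n * x * (2 * u) + ((n * (x^2 + x) + x * (n * k1 + (2 : ZMod p)⁻¹ * n * (n - 1)))
        + (n * (u^2 + u) + u * (n * k2 + (2 : ZMod p)⁻¹ * n * (n - 1))))))
      (fun t => ?_)).symm
    simp only [Equiv.subRight_apply]
    rw [← chi_add]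
    congr 1
    have h2 := two_ne p hp2
    field_simp
    ring
  rw [Finset.sum_congr rfl (fun x _ => key x), ← Finset.sum_mul, chi_sum]

lemma step1 (hp2 : p ≠ 2) (j1 j2 k1 k2 n : ZMod p) :
    (∑ x : ZMod p, ∑ y : ZMod p, chi p (n * x * y)
        * ((Aop p x ^ n.val) j1 k1 * (Bop p y ^ n.val) j2 k2))
    = if j1 = k1 + n ∧ j2 = k2 + n then
        (if n * (k1 - k2) = 0 then (p : ℂ) else 0)
          * ∑ t : ZMod p, chi p (n * t^2 + (2 : ZMod p)⁻¹ * n * (2 * k2 + n + 1) * t)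
      else 0 := by
  simp only [Bop_eq_Aop p hp2]
  have hy : ∀ x : ZMod p, (∑ y : ZMod p, chi p (n * x * y)
        * ((Aop p x ^ n.val) j1 k1 * (Aop p ((2:ZMod p)⁻¹ * y) ^ n.val) j2 k2))
      = ∑ u : ZMod p, chi p (n * x * (2 * u))
        * ((Aop p x ^ n.val) j1 k1 * (Aop p u ^ n.val) j2 k2) := by
    intro x
    refine (Fintype.sum_equiv (Equiv.mulLeft₀ (2 : ZMod p) (two_ne p hp2))
      (fun u : ZMod p => chi p (n * x * (2 * u))
        * ((Aop p x ^ n.val) j1 k1 * (Aop p u ^ n.val) j2 k2))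
      (fun y : ZMod p => chi p (n * x * y)
        * ((Aop p x ^ n.val) j1 k1 * (Aop p ((2:ZMod p)⁻¹ * y) ^ n.val) j2 k2))
      (fun u => ?_)).symm
    have he : (Equiv.mulLeft₀ (2 : ZMod p) (two_ne p hp2)) u = 2 * u := rfl
    rw [he]
    show chi p (n * x * (2 * u)) * ((Aop p x ^ n.val) j1 k1 * (Aop p u ^ n.val) j2 k2)
      = chi p (n * x * (2 * u)) * ((Aop p x ^ n.val) j1 k1
        * (Aop p ((2 : ZMod p)⁻¹ * (2 * u)) ^ n.val) j2 k2)
    rw [inv_mul_cancel_left₀ (two_ne p hp2)]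
  rw [Finset.sum_congr rfl (fun x _ => hy x)]
  simp only [Aop_pow_entry p hp2, ZMod.natCast_val, ZMod.cast_id]
  by_cases hc : j1 = k1 + n ∧ j2 = k2 + n
  · rw [if_pos hc]
    rw [← Hsum p hp2 n k1 k2]
    apply Finset.sum_congr rfl
    intro x _
    apply Finset.sum_congr rfl
    intro u _
    rw [if_pos hc.1, if_pos hc.2, ← chi_add, ← chi_add]
  · rw [if_neg hc]
    apply Finset.sum_eq_zero
    intro x _
    apply Finset.sum_eq_zero
    intro u _
    rcases not_and_or.mp hc with h | h
    · rw [if_neg h, zero_mul, mul_zero]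
    · rw [if_neg h, mul_zero, mul_zero]

lemma Bell_entry (hp2 : p ≠ 2) (j1 j2 k1 k2 : ZMod p) :
    Bell p (j1, j2) (k1, k2) =
      if j1 = j2 ∧ k1 = k2 then (p : ℂ) * Sop p j1 k1
      else if j1 = k1 ∧ j2 = k2 then (p : ℂ) else 0 := by
  have hBell : Bell p (j1, j2) (k1, k2) = (p : ℂ)⁻¹ *
      ∑ n : ZMod p, ∑ x : ZMod p, ∑ y : ZMod p, chi p (n * x * y)
        * ((Aop p x ^ n.val) j1 k1 * (Bop p y ^ n.val) j2 k2) := by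
    rw [Bell, Matrix.smul_apply]
    congr 1
    rw [Matrix.sum_apply]
    apply Finset.sum_congr rfl; intro n _
    rw [Matrix.sum_apply]
    apply Finset.sum_congr rfl; intro x _
    rw [Matrix.sum_apply]
    apply Finset.sum_congr rfl; intro y _
    rw [Matrix.smul_apply, Matrix.kroneckerMap_apply, smul_eq_mul]
  rw [hBell, Finset.sum_congr rfl (fun n _ => step1 p hp2 j1 j2 k1 k2 n)]
  have hiff : ∀ n : ZMod p, (j1 = k1 + n ∧ j2 = k2 + n)
      ↔ (n = j1 - k1 ∧ j1 - k1 = j2 - k2) := by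
    intro n
    constructor
    · rintro ⟨h1, h2⟩
      constructor
      · rw [h1]; ring
      · rw [h1, h2]; ring
    · rintro ⟨rfl, h2⟩
      constructor
      · ring
      · rw [h2]; ring
  simp only [hiff]
  by_cases hd : j1 - k1 = j2 - k2
  · rw [Finset.sum_congr rfl (fun n _ => by rw [if_congr (and_iff_left hd) rfl rfl]),
      Finset.sum_ite_eq' Finset.univ (j1 - k1), if_pos (Finset.mem_univ _)]
    by_cases hjk : j1 = j2 ∧ k1 = k2
    · rw [if_pos hjk]
      obtain ⟨hj, hk⟩ := hjk
      have hz : (j1 - k1) * (k1 - k2) = 0 := by rw [hk]; ring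
      rw [if_pos hz, S_entry p hp2, ← mul_assoc, inv_mul_cancel₀ (pC_ne p), one_mul]
      apply Finset.sum_congr rfl
      intro t _
      congr 1
      rw [← hk]
      ring
    · rw [if_neg hjk]
      by_cases hd0 : j1 - k1 = 0
      · have hj1 : j1 = k1 := by rw [sub_eq_zero] at hd0; exact hd0
        have hj2 : j2 = k2 := by
          rw [hd0] at hd
          have h' := hd.symm
          rw [sub_eq_zero] at h'
          exact h'
        rw [hd0, if_pos (show (0 : ZMod p) * (k1 - k2) = 0 by ring), if_pos ⟨hj1, hj2⟩]
        have : ∀ t : ZMod p, chi p ((0:ZMod p) * t^2 + (2:ZMod p)⁻¹ * 0 * (2*k2+0+1) * t)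
            = 1 := by
          intro t
          rw [show (0:ZMod p) * t^2 + (2:ZMod p)⁻¹ * 0 * (2*k2+0+1) * t = 0 by ring, chi_zero]
        rw [Finset.sum_congr rfl (fun t _ => this t), Finset.sum_const, Finset.card_univ,
          ZMod.card, nsmul_eq_mul, mul_one]
        field_simp
      · have hk12 : k1 ≠ k2 := by
          intro he
          apply hjk
          refine ⟨?_, he⟩
          have : j1 - k1 = j2 - k1 := by rw [hd, he]
          exact sub_left_inj.mp this
        have hz : (j1 - k1) * (k1 - k2) ≠ 0 :=
          mul_ne_zero hd0 (sub_ne_zero.mpr hk12)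
        rw [if_neg hz, zero_mul, mul_zero]
        rw [if_neg (by rintro ⟨h1, _⟩; exact hd0 (by rw [h1]; ring))]
  · have h1 : ¬(j1 = j2 ∧ k1 = k2) := by
      rintro ⟨rfl, rfl⟩; exact hd rfl
    have h2 : ¬(j1 = k1 ∧ j2 = k2) := by
      rintro ⟨rfl, rfl⟩; exact hd (by rw [sub_self, sub_self])
    rw [if_neg h1, if_neg h2]
    rw [Finset.sum_congr rfl (fun n _ => by rw [if_neg (by rintro ⟨_, h⟩; exact hd h)]),
      Finset.sum_const, smul_zero, mul_zero]

end MatrixLemmas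

section SpectralTools
variable {n : Type*} [Fintype n] [DecidableEq n]

lemma det_sub_herm (M : Matrix n n ℂ) (hM : M.IsHermitian) (ν : ℂ) :
    det (ν • (1 : Matrix n n ℂ) - M) = ∏ i, (ν - (hM.eigenvalues i : ℂ)) := by
  set U : Matrix n n ℂ := (hM.eigenvectorUnitary : Matrix n n ℂ) with hUdef
  have hU : U * star U = 1 := Matrix.mem_unitaryGroup_iff.mp hM.eigenvectorUnitary.2
  have hU' : star U * U = 1 := Matrix.mem_unitaryGroup_iff'.mp hM.eigenvectorUnitary.2
  have hM' : M = U * Matrix.diagonal (RCLike.ofReal ∘ hM.eigenvalues) * star U :=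
    hM.spectral_theorem
  have h1 : ν • (1 : Matrix n n ℂ) - M
      = U * (ν • (1 : Matrix n n ℂ) - Matrix.diagonal (RCLike.ofReal ∘ hM.eigenvalues))
        * star U := by
    rw [Matrix.mul_sub, Matrix.sub_mul, Matrix.mul_smul, Matrix.mul_one, Matrix.smul_mul, hU,
      ← hM']
  rw [h1, det_mul, det_mul, mul_comm, ← mul_assoc, ← det_mul, hU', det_one, one_mul]
  rw [Matrix.smul_one_eq_diagonal, Matrix.diagonal_sub, det_diagonal]
  rfl

lemma mem_spectrum_iff_det (M : Matrix n n ℂ) (μ : ℂ) :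
    μ ∈ spectrum ℂ M ↔ det (μ • (1 : Matrix n n ℂ) - M) = 0 := by
  rw [spectrum.mem_iff, Matrix.isUnit_iff_isUnit_det, isUnit_iff_ne_zero, not_not]
  congr! 2
  rw [Algebra.algebraMap_eq_smul_one]

lemma herm_spec (M : Matrix n n ℂ) (hM : M.IsHermitian) (μ : ℂ) :
    μ ∈ spectrum ℂ M ↔ ∃ i, (hM.eigenvalues i : ℂ) = μ := by
  rw [mem_spectrum_iff_det, det_sub_herm M hM, Finset.prod_eq_zero_iff]
  constructor
  · rintro ⟨i, _, hi⟩
    exact ⟨i, by linear_combination -hi⟩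
  · rintro ⟨i, hi⟩
    exact ⟨i, Finset.mem_univ i, by linear_combination -hi⟩

lemma det_sub_smul_herm (M : Matrix n n ℂ) (hM : M.IsHermitian) (c ν : ℂ) :
    det (ν • (1 : Matrix n n ℂ) - c • M) = ∏ i, (ν - c * (hM.eigenvalues i : ℂ)) := by
  set U : Matrix n n ℂ := (hM.eigenvectorUnitary : Matrix n n ℂ) with hUdef
  have hU : U * star U = 1 := Matrix.mem_unitaryGroup_iff.mp hM.eigenvectorUnitary.2
  have hU' : star U * U = 1 := Matrix.mem_unitaryGroup_iff'.mp hM.eigenvectorUnitary.2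
  have hM' : M = U * Matrix.diagonal (RCLike.ofReal ∘ hM.eigenvalues) * star U :=
    hM.spectral_theorem
  have h1 : ν • (1 : Matrix n n ℂ) - c • M
      = U * (ν • (1 : Matrix n n ℂ) - c • Matrix.diagonal (RCLike.ofReal ∘ hM.eigenvalues))
        * star U := by
    rw [Matrix.mul_sub, Matrix.sub_mul, Matrix.mul_smul, Matrix.mul_one, Matrix.smul_mul, hU,
      Matrix.mul_smul, Matrix.smul_mul, ← hM']
  rw [h1, det_mul, det_mul, mul_comm, ← mul_assoc, ← det_mul, hU', det_one, one_mul]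
  rw [Matrix.smul_one_eq_diagonal, ← Matrix.diagonal_smul, Matrix.diagonal_sub, det_diagonal]
  rfl

lemma smul_herm_spec (M : Matrix n n ℂ) (hM : M.IsHermitian) (c μ : ℂ) :
    μ ∈ spectrum ℂ (c • M) ↔ ∃ i, c * (hM.eigenvalues i : ℂ) = μ := by
  rw [mem_spectrum_iff_det, det_sub_smul_herm M hM, Finset.prod_eq_zero_iff]
  constructor
  · rintro ⟨i, _, hi⟩
    exact ⟨i, by linear_combination -hi⟩
  · rintro ⟨i, hi⟩
    exact ⟨i, Finset.mem_univ i, by linear_combination -hi⟩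

end SpectralTools

section Sfacts
variable (p : ℕ) [Fact p.Prime]

lemma Sop_herm : (Sop p).IsHermitian := by
  haveI : NeZero p := ⟨(p_pos p).ne'⟩
  show (Sop p)ᴴ = Sop p
  ext i j
  simp only [Matrix.conjTranspose_apply, Sop, Matrix.sum_apply]
  rw [show (star (∑ c : ZMod p, proj p (psi p c (-c * (c + 2⁻¹))) j i) : ℂ)
    = (starRingEnd ℂ) (∑ c : ZMod p, proj p (psi p c (-c * (c + 2⁻¹))) j i) from rfl, map_sum]
  apply Finset.sum_congr rfl
  intro B _
  simp only [proj, _root_.map_mul, Complex.conj_conj]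
  ring

lemma Sop_diag (hp2 : p ≠ 2) (j : ZMod p) : Sop p j j = 1 := by
  haveI : NeZero p := ⟨(p_pos p).ne'⟩
  have h := S_entry p hp2 j j
  have h2 : ∀ t : ZMod p, chi p ((j - j) * t^2 + (2 : ZMod p)⁻¹ * (j - j) * (j + j + 1) * t)
      = 1 := by
    intro t
    rw [show (j - j) * t^2 + (2 : ZMod p)⁻¹ * (j - j) * (j + j + 1) * t = 0 by ring, chi_zero]
  rw [Finset.sum_congr rfl (fun t _ => h2 t), Finset.sum_const, Finset.card_univ, ZMod.card,
    nsmul_eq_mul, mul_one] at h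
  exact mul_left_cancel₀ (pC_ne p) (h.trans (mul_one (p:ℂ)).symm)

lemma eig_sum (hp2 : p ≠ 2) : ∑ i, (Sop_herm p).eigenvalues i = (p : ℝ) := by
  haveI : NeZero p := ⟨(p_pos p).ne'⟩
  have hS := Sop_herm p
  have h1 : Matrix.trace (Sop p) = (p : ℂ) := by
    rw [Matrix.trace]
    have : ∀ j : ZMod p, Matrix.diag (Sop p) j = 1 := fun j => Sop_diag p hp2 j
    rw [Finset.sum_congr rfl (fun j _ => this j), Finset.sum_const, Finset.card_univ, ZMod.card,
      nsmul_eq_mul, mul_one]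
  have h2 : Matrix.trace (Sop p) = ∑ i, ((Sop_herm p).eigenvalues i : ℂ) := by
    set U : Matrix (ZMod p) (ZMod p) ℂ := (hS.eigenvectorUnitary : Matrix (ZMod p) (ZMod p) ℂ)
    have hU' : star U * U = 1 := Matrix.mem_unitaryGroup_iff'.mp hS.eigenvectorUnitary.2
    conv_lhs => rw [hS.spectral_theorem]
    rw [Unitary.conjStarAlgAut_apply, Matrix.trace_mul_comm, ← Matrix.mul_assoc, hU', Matrix.one_mul, Matrix.trace_diagonal]
    rfl
  have h3 : (∑ i, ((Sop_herm p).eigenvalues i : ℂ)) = ((∑ i, (Sop_herm p).eigenvalues i : ℝ) : ℂ) := by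
    push_cast; rfl
  have := h1.symm.trans (h2.trans h3)
  exact_mod_cast this.symm

lemma eig_exists_ge_one (hp2 : p ≠ 2) : ∃ i, 1 ≤ (Sop_herm p).eigenvalues i := by
  haveI : NeZero p := ⟨(p_pos p).ne'⟩
  by_contra h
  push_neg at h
  have hlt := Finset.sum_lt_sum_of_nonempty (Finset.univ_nonempty) (fun i _ => h i)
  rw [eig_sum p hp2, Finset.sum_const, Finset.card_univ, ZMod.card, nsmul_eq_mul, mul_one] at hlt
  exact lt_irrefl _ hlt

end Sfacts

theorem stmt13 (p : ℕ) [Fact p.Prime] (hp2 : p ≠ 2) :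
    sSup {μ : ℝ | (μ : ℂ) ∈ spectrum ℂ (Bell p)}
      = p * sSup {μ : ℝ | (μ : ℂ) ∈ spectrum ℂ (Sop p)} := by
  haveI : NeZero p := ⟨(p_pos p).ne'⟩
  haveI : Fact (1 < p) := ⟨(Fact.out : p.Prime).one_lt⟩
  have hS : (Sop p).IsHermitian := Sop_herm p
  set eig := hS.eigenvalues with heig
  -- the coordinate equivalence
  let Od := {q : ZMod p × ZMod p // q.1 ≠ q.2}
  haveI hOdne : Nonempty Od := ⟨⟨(0, 1), by simp⟩⟩
  let e : (ZMod p ⊕ Od) ≃ (ZMod p × ZMod p) :=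
    { toFun := Sum.elim (fun a => (a, a)) (fun q => q.val)
      invFun := fun q => if h : q.1 = q.2 then Sum.inl q.1 else Sum.inr ⟨q, h⟩
      left_inv := by
        rintro (a | ⟨⟨q1, q2⟩, h⟩)
        · simp
        · simp [h]
      right_inv := by
        rintro ⟨q1, q2⟩
        by_cases h : q1 = q2
        · subst h; simp
        · simp [h] }
  -- block structure
  have hblock : (Matrix.reindexAlgEquiv ℂ ℂ e.symm) (Bell p)
      = Matrix.fromBlocks ((p : ℂ) • Sop p) 0 0 ((p : ℂ) • (1 : Matrix Od Od ℂ)) := by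
    ext i j
    rw [Matrix.reindexAlgEquiv_apply, Matrix.reindex_apply, Matrix.submatrix_apply,
      Equiv.symm_symm]
    cases i with
    | inl a =>
      cases j with
      | inl b =>
        show Bell p (a, a) (b, b) = ((p : ℂ) • Sop p) a b
        rw [Bell_entry p hp2, if_pos ⟨rfl, rfl⟩, Matrix.smul_apply, smul_eq_mul]
      | inr q =>
        show Bell p (a, a) (q.val.1, q.val.2) = 0
        rw [Bell_entry p hp2, if_neg (by rintro ⟨-, h⟩; exact q.prop h),
          if_neg (by rintro ⟨h1, h2⟩; exact q.prop (h1 ▸ h2 ▸ rfl))]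
    | inr q =>
      cases j with
      | inl b =>
        show Bell p (q.val.1, q.val.2) (b, b) = 0
        rw [Bell_entry p hp2, if_neg (by rintro ⟨h, -⟩; exact q.prop h),
          if_neg (by rintro ⟨h1, h2⟩; exact q.prop (h1.trans h2.symm))]
      | inr r =>
        show Bell p (q.val.1, q.val.2) (r.val.1, r.val.2) = ((p : ℂ) • (1 : Matrix Od Od ℂ)) q r
        rw [Bell_entry p hp2, if_neg (by rintro ⟨h, -⟩; exact q.prop h),
          Matrix.smul_apply, Matrix.one_apply, smul_eq_mul]
        by_cases h : q = r
        · subst h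
          rw [if_pos ⟨rfl, rfl⟩, if_pos rfl, mul_one]
        · rw [if_neg (by
            rintro ⟨h1, h2⟩
            exact h (Subtype.ext (Prod.ext h1 h2))), if_neg h, mul_zero]
  -- spectrum characterization
  have hchar : ∀ μ : ℂ, μ ∈ spectrum ℂ (Bell p)
      ↔ ((∃ i, (p : ℂ) * (eig i : ℂ) = μ) ∨ μ = (p : ℂ)) := by
    intro μ
    rw [← AlgEquiv.spectrum_eq (Matrix.reindexAlgEquiv ℂ ℂ e.symm) (Bell p), hblock,
      mem_spectrum_iff_det]
    have hsplit : μ • (1 : Matrix (ZMod p ⊕ Od) (ZMod p ⊕ Od) ℂ)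
        - Matrix.fromBlocks ((p : ℂ) • Sop p) 0 0 ((p : ℂ) • (1 : Matrix Od Od ℂ))
        = Matrix.fromBlocks (μ • 1 - (p : ℂ) • Sop p) 0 0
            (μ • (1 : Matrix Od Od ℂ) - (p : ℂ) • 1) := by
      rw [← Matrix.fromBlocks_one, Matrix.fromBlocks_smul, sub_eq_add_neg,
        Matrix.fromBlocks_neg, Matrix.fromBlocks_add]
      congr 1 <;> simp [sub_eq_add_neg]
    rw [hsplit, Matrix.det_fromBlocks_zero₂₁, det_sub_smul_herm (Sop p) hS (p : ℂ) μ]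
    have h2 : μ • (1 : Matrix Od Od ℂ) - (p : ℂ) • 1 = (μ - (p : ℂ)) • 1 := by
      rw [sub_smul]
    rw [h2, Matrix.det_smul, det_one, mul_one, mul_eq_zero, Finset.prod_eq_zero_iff]
    constructor
    · rintro (⟨i, -, hi⟩ | hpow)
      · exact Or.inl ⟨i, by linear_combination -hi⟩
      · exact Or.inr (by
          have := pow_eq_zero_iff (Fintype.card_ne_zero (α := Od)) |>.mp hpow
          linear_combination this)
    · rintro (⟨i, hi⟩ | rfl)
      · exact Or.inl ⟨i, Finset.mem_univ i, by linear_combination -hi⟩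
      · exact Or.inr (by
          rw [sub_self]
          exact zero_pow (Fintype.card_ne_zero (α := Od)))
  -- real spectra as sets
  have hsetL : {μ : ℝ | (μ : ℂ) ∈ spectrum ℂ (Bell p)}
      = Set.range (fun i => (p : ℝ) * eig i) ∪ {(p : ℝ)} := by
    ext μ
    simp only [Set.mem_setOf_eq, hchar, Set.mem_union, Set.mem_range, Set.mem_singleton_iff]
    constructor
    · rintro (⟨i, hi⟩ | hp)
      · exact Or.inl ⟨i, by exact_mod_cast hi⟩
      · exact Or.inr (by exact_mod_cast hp)
    · rintro (⟨i, hi⟩ | rfl)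
      · exact Or.inl ⟨i, by exact_mod_cast hi⟩
      · exact Or.inr (by push_cast; ring)
  have hsetR : {μ : ℝ | (μ : ℂ) ∈ spectrum ℂ (Sop p)} = Set.range eig := by
    ext μ
    simp only [Set.mem_setOf_eq, Set.mem_range, herm_spec (Sop p) hS]
    constructor
    · rintro ⟨i, hi⟩
      exact ⟨i, by exact_mod_cast hi⟩
    · rintro ⟨i, hi⟩
      exact ⟨i, by exact_mod_cast hi⟩
  rw [hsetL, hsetR]
  -- sSup computation
  have hTfin : (Set.range eig).Finite := Set.finite_range eig
  have hTne : (Set.range eig).Nonempty := Set.range_nonempty eig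
  set m := sSup (Set.range eig) with hm
  have hmem : m ∈ Set.range eig := hTne.csSup_mem hTfin
  have hub : ∀ x ∈ Set.range eig, x ≤ m := fun x hx => le_csSup hTfin.bddAbove hx
  obtain ⟨i1, hi1⟩ := eig_exists_ge_one p hp2
  have h1m : 1 ≤ m := le_trans hi1 (hub _ ⟨i1, rfl⟩)
  have hpnn : (0 : ℝ) ≤ (p : ℝ) := Nat.cast_nonneg p
  have hgreat : IsGreatest (Set.range (fun i => (p : ℝ) * eig i) ∪ {(p : ℝ)}) ((p : ℝ) * m) := by
    constructor
    · obtain ⟨i0, hi0⟩ := hmem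
      exact Or.inl ⟨i0, show (p : ℝ) * eig i0 = _ by rw [hi0]⟩
    · rintro x (⟨i, rfl⟩ | rfl)
      · exact mul_le_mul_of_nonneg_left (hub _ ⟨i, rfl⟩) hpnn
      · calc (p : ℝ) = (p : ℝ) * 1 := (mul_one _).symm
          _ ≤ (p : ℝ) * m := mul_le_mul_of_nonneg_left h1m hpnn
  rw [hgreat.csSup_eq]
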